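/- Let K be a field and A a K-algebra possessing a K-basis given by a subset Σ of A. Suppose that for every real number p > 1 and every finite subset K' of Σ, there is a finite subset F of Σ such that |K'F \ {0}| < p·|F|, where K'F = {kf : k ∈ K', f ∈ F}. Then A is amenable. -/

import Mathlib

open Pointwise

/-- A `K`-algebra `A` is amenable if for every finite-dimensional `K`-subspace `U` of `A`
and every real `p > 1` there exists a finite-dimensional `K`-subspace `V` of `A` with
`dim_K (U*V) < p * dim_K V`.  Here `U*V` denotes the `K`-span of all products `u * v`
with `u ∈ U`, `v ∈ V`. -/
def IsAmenableAlgebra (K A : Type*) [Field K] [Ring A] [Algebra K A] : Prop :=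
  ∀ U : Submodule K A, FiniteDimensional K U →
    ∀ p : ℝ, 1 < p →
      ∃ V : Submodule K A, FiniteDimensional K V ∧
        (Module.finrank K ↥(U * V) : ℝ) < p * (Module.finrank K ↥V : ℝ)

lemma span_diff_zero' {K A : Type*} [Field K] [AddCommGroup A] [Module K A] (s : Set A) :
    Submodule.span K (s \ {0}) = Submodule.span K s := by
  apply le_antisymm (Submodule.span_mono Set.diff_subset)
  rw [Submodule.span_le]
  intro x hx
  by_cases h : x = 0
  · simp [h]
  · exact Submodule.subset_span ⟨hx, h⟩

/-- Let `K` be a field and `A` a `K`-algebra with a `K`-basis given by a subset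
`Sgm ⊆ A`.  Suppose that for every real `p > 1` and every finite subset `K' ⊆ Sgm`
there is a finite subset `F ⊆ Sgm` such that `|K'F \ {0}| < p * |F|`, where
`K'F = {k * f : k ∈ K', f ∈ F}`.  Then `A` is amenable. -/
theorem statement18 (K A : Type*) [Field K] [Ring A] [Algebra K A] (Sgm : Set A)
    (hbasis : LinearIndependent K ((↑) : Sgm → A) ∧ Submodule.span K Sgm = ⊤)
    (hcomb : ∀ p : ℝ, 1 < p → ∀ K' : Finset A, (K' : Set A) ⊆ Sgm →
      ∃ F : Finset A, (F : Set A) ⊆ Sgm ∧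
        ((((K' : Set A) * (F : Set A)) \ {0}).ncard : ℝ) < p * F.card) :
    IsAmenableAlgebra K A := by
  classical
  obtain ⟨hli, hspan⟩ := hbasis
  intro U hU p hp
  obtain ⟨t, ht⟩ : U.FG := (Submodule.fg_iff_finiteDimensional U).mpr hU
  -- each element of t lies in span of a finite subset of Sgm
  have hmem : ∀ x ∈ t, ∃ s : Finset A, (s : Set A) ⊆ Sgm ∧ x ∈ Submodule.span K (s : Set A) := by
    intro x _
    have : x ∈ Submodule.span K Sgm := by rw [hspan]; trivial
    exact Submodule.mem_span_finite_of_mem_span this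
  choose f hf1 hf2 using hmem
  set K' : Finset A := t.attach.biUnion (fun x => f x x.2) with hK'
  have hK'sub : (K' : Set A) ⊆ Sgm := by
    intro a ha
    simp only [hK', Finset.coe_biUnion, Set.mem_iUnion] at ha
    obtain ⟨x, hx, hax⟩ := ha
    exact hf1 x x.2 hax
  have hUle : U ≤ Submodule.span K (K' : Set A) := by
    rw [← ht, Submodule.span_le]
    intro x hx
    refine Submodule.span_mono ?_ (hf2 x hx)
    intro a ha
    simp only [hK', Finset.coe_biUnion, Set.mem_iUnion]
    exact ⟨⟨x, hx⟩, Finset.mem_attach _ _, ha⟩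
  obtain ⟨F, hFsub, hFlt⟩ := hcomb p hp K' hK'sub
  refine ⟨Submodule.span K (F : Set A), inferInstance, ?_⟩
  have hVfr : Module.finrank K ↥(Submodule.span K (F : Set A)) = F.card :=
    finrank_span_finset_eq_card (LinearIndepOn.mono (show LinearIndepOn K id Sgm from hli) hFsub)
  have hle : U * Submodule.span K (F : Set A) ≤
      Submodule.span K ((((K' : Set A) * (F : Set A)) \ {0})) := by
    rw [span_diff_zero', ← Submodule.span_mul_span]
    exact mul_le_mul_left hUle _
  have hfin : (((K' : Set A) * (F : Set A)) \ {0}).Finite :=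
    ((K'.finite_toSet.mul F.finite_toSet).diff)
  have h1 : Module.finrank K ↥(U * Submodule.span K (F : Set A)) ≤
      (((K' : Set A) * (F : Set A)) \ {0}).ncard := by
    have h2 : Module.finrank K ↥(Submodule.span K ((((K' : Set A) * (F : Set A)) \ {0}))) ≤
        hfin.toFinset.card := by
      conv_lhs => rw [← hfin.coe_toFinset]
      exact finrank_span_finset_le_card hfin.toFinset
    rw [Set.ncard_eq_toFinset_card _ hfin]
    have hfd : FiniteDimensional K
        ↥(Submodule.span K ((((K' : Set A) * (F : Set A)) \ {0}))) := by
      rw [← hfin.coe_toFinset]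
      infer_instance
    exact le_trans (Submodule.finrank_mono hle) h2
  calc (Module.finrank K ↥(U * Submodule.span K (F : Set A)) : ℝ)
      ≤ ((((K' : Set A) * (F : Set A)) \ {0}).ncard : ℝ) := by exact_mod_cast h1
    _ < p * F.card := hFlt
    _ = p * (Module.finrank K ↥(Submodule.span K (F : Set A)) : ℝ) := by rw [hVfr]
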